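/- arXiv:2010.10413 — 3 statements merged into one kernel-verified Lean document; each statement's English description precedes it below -/
import Mathlib

section
/- Let X be a connected finite simple graph on n vertices and let a, b be Laplacian strongly cospectral vertices such that Φ⁻ is nonempty and Φ⁺ contains a nonzero element. Let θ⁺ and θ⁻ be the largest elements of Φ⁺ and Φ⁻ respectively, and let λ⁺ and λ⁻ be the smallest nonzero elements of Φ⁺ and Φ⁻ respectively, and write d = deg(a). (i) If a and b are not adjacent, then max{((n−2)/n)λ⁺, λ⁻} ≤ d ≤ min{((n−2)/n)θ⁺, θ⁻}. (ii) If a and b are adjacent, then max{((n−2)/n)λ⁺ + 1, λ⁻ − 1} ≤ d ≤ min{((n−2)/n)θ⁺ + 1, θ⁻ − 1}. -/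
open Matrix

noncomputable def lapR {V : Type*} [Fintype V] [DecidableEq V] (G : SimpleGraph V) :
    Matrix V V ℝ :=
  letI := Classical.decRel G.Adj
  G.lapMatrix ℝ

noncomputable def lapC {V : Type*} [Fintype V] [DecidableEq V] (G : SimpleGraph V) :
    Matrix V V ℂ :=
  (lapR G).map Complex.ofReal

noncomputable def transition {V : Type*} [Fintype V] [DecidableEq V] (G : SimpleGraph V)
    (t : ℝ) : Matrix V V ℂ :=
  NormedSpace.exp ((Complex.I * (t : ℂ)) • lapC G)

/-- proper Laplacian fractional revival between distinct vertices `a, b` at time `τ`. -/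
def properLaFR {V : Type*} [Fintype V] [DecidableEq V] (G : SimpleGraph V) (a b : V)
    (τ : ℝ) : Prop :=
  a ≠ b ∧ ∃ α β : ℂ, β ≠ 0 ∧
    transition G τ *ᵥ Pi.single a 1 =
      α • (Pi.single a 1 : V → ℂ) + β • (Pi.single b 1 : V → ℂ)

/-- Laplacian periodicity at vertex `a` at time `τ`. -/
def periodicAt {V : Type*} [Fintype V] [DecidableEq V] (G : SimpleGraph V) (a : V)
    (τ : ℝ) : Prop :=
  ∃ α : ℂ, transition G τ *ᵥ Pi.single a 1 = α • (Pi.single a 1 : V → ℂ)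

/-- The matrix of the orthogonal projection onto the `μ`-eigenspace of the Laplacian. -/
noncomputable def eigProj {V : Type*} [Fintype V] [DecidableEq V] (G : SimpleGraph V)
    (μ : ℝ) : Matrix V V ℝ :=
  Matrix.toEuclideanLin.symm
    ((Module.End.eigenspace (Matrix.toEuclideanLin (lapR G)) μ).subtype ∘ₗ
      (Submodule.orthogonalProjectionOnto
        (Module.End.eigenspace (Matrix.toEuclideanLin (lapR G)) μ) :
          EuclideanSpace ℝ V →L[ℝ] _).toLinearMap)

def StronglyCospectral {V : Type*} [Fintype V] [DecidableEq V] (G : SimpleGraph V)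
    (a b : V) : Prop :=
  ∀ μ : ℝ, eigProj G μ *ᵥ Pi.single a 1 = eigProj G μ *ᵥ Pi.single b 1 ∨
    eigProj G μ *ᵥ Pi.single a 1 = -(eigProj G μ *ᵥ Pi.single b 1)

def PhiPlus {V : Type*} [Fintype V] [DecidableEq V] (G : SimpleGraph V) (a b : V) :
    Set ℝ :=
  {μ | eigProj G μ *ᵥ Pi.single a 1 = eigProj G μ *ᵥ Pi.single b 1 ∧
    eigProj G μ *ᵥ Pi.single a 1 ≠ 0}

def PhiMinus {V : Type*} [Fintype V] [DecidableEq V] (G : SimpleGraph V) (a b : V) :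
    Set ℝ :=
  {μ | eigProj G μ *ᵥ Pi.single a 1 = -(eigProj G μ *ᵥ Pi.single b 1) ∧
    eigProj G μ *ᵥ Pi.single a 1 ≠ 0}

def eigSupport {V : Type*} [Fintype V] [DecidableEq V] (G : SimpleGraph V) (a : V) :
    Set ℝ :=
  {μ | eigProj G μ *ᵥ Pi.single a 1 ≠ 0}

/-- `r` is an integer multiple of the natural number `g`. -/
def intDvd (g : ℕ) (r : ℝ) : Prop := ∃ k : ℤ, r = (g : ℝ) * k

section Aux
variable {V : Type*} [Fintype V] [DecidableEq V] (X : SimpleGraph V)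

open Module.End Finset

/-- the Laplacian as an operator on Euclidean space -/
noncomputable def lapT : EuclideanSpace ℝ V →ₗ[ℝ] EuclideanSpace ℝ V :=
  Matrix.toEuclideanLin (lapR X)

lemma lapR_isSymm : (lapR X).IsSymm := by
  letI := Classical.decRel X.Adj
  exact X.isSymm_lapMatrix (R := ℝ)

lemma lapT_symmetric : (lapT X).IsSymmetric := by
  rw [lapT, ← Matrix.isHermitian_iff_isSymmetric]
  show (lapR X).conjTranspose = lapR X
  rw [Matrix.conjTranspose_eq_transpose_of_trivial]
  exact lapR_isSymm X

/-- the projection onto the μ-eigenspace, as a linear map -/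
noncomputable def Pmap (μ : ℝ) : EuclideanSpace ℝ V →ₗ[ℝ] EuclideanSpace ℝ V :=
  (Module.End.eigenspace (Matrix.toEuclideanLin (lapR X)) μ).subtype ∘ₗ
    (Submodule.orthogonalProjectionOnto
      (Module.End.eigenspace (Matrix.toEuclideanLin (lapR X)) μ) :
        EuclideanSpace ℝ V →L[ℝ] _).toLinearMap

lemma eigProj_def (μ : ℝ) : eigProj X μ = Matrix.toEuclideanLin.symm (Pmap X μ) := rfl

lemma bridge (μ : ℝ) (v : V) :
    eigProj X μ *ᵥ Pi.single v 1 =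
      WithLp.equiv 2 (V → ℝ) (Pmap X μ (EuclideanSpace.single v 1)) := by
  rw [eigProj_def, ← Matrix.toEuclideanLin.apply_symm_apply (Pmap X μ),
    WithLp.equiv_apply, Matrix.ofLp_toEuclideanLin_apply]
  simp


/-- orthonormal basis of eigenvectors -/
noncomputable def evB : OrthonormalBasis (Fin (Fintype.card V)) ℝ (EuclideanSpace ℝ V) :=
  (lapT_symmetric X).eigenvectorBasis finrank_euclideanSpace

noncomputable def evL : Fin (Fintype.card V) → ℝ :=
  (lapT_symmetric X).eigenvalues finrank_euclideanSpace

lemma lapT_evB (i : Fin (Fintype.card V)) :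
    lapT X (evB X i) = evL X i • evB X i :=
  (lapT_symmetric X).apply_eigenvectorBasis finrank_euclideanSpace i

lemma evB_mem (i : Fin (Fintype.card V)) :
    evB X i ∈ Module.End.eigenspace (Matrix.toEuclideanLin (lapR X)) (evL X i) :=
  Module.End.mem_eigenspace_iff.mpr (lapT_evB X i)

lemma Pmap_eq_sum (μ : ℝ) (x : EuclideanSpace ℝ V) :
    Pmap X μ x = ∑ i ∈ Finset.univ.filter (fun i => evL X i = μ),
      (inner ℝ (evB X i) x : ℝ) • evB X i := by
  classical
  set S := Module.End.eigenspace (Matrix.toEuclideanLin (lapR X)) μ with hS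
  set y := ∑ i ∈ Finset.univ.filter (fun i => evL X i = μ),
      (inner ℝ (evB X i) x : ℝ) • evB X i with hy
  set z := ∑ i ∈ Finset.univ.filter (fun i => ¬ evL X i = μ),
      (inner ℝ (evB X i) x : ℝ) • evB X i with hz
  have hyz : y + z = x := by
    rw [hy, hz, Finset.sum_filter_add_sum_filter_not]
    exact (evB X).sum_repr' x
  have hyS : y ∈ S := by
    apply Submodule.sum_mem
    intro i hi
    rw [Finset.mem_filter] at hi
    have hm := evB_mem X i
    rw [hi.2] at hm
    exact Submodule.smul_mem _ _ hm
  have hzS : z ∈ Sᗮ := by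
    apply Submodule.sum_mem
    intro i hi
    rw [Finset.mem_filter] at hi
    apply Submodule.smul_mem
    rw [Submodule.mem_orthogonal]
    intro u hu
    exact (lapT_symmetric X).orthogonalFamily_eigenspaces
      (fun h => hi.2 h.symm) ⟨u, hu⟩ ⟨evB X i, evB_mem X i⟩
  have : Pmap X μ x = (S.orthogonalProjectionOnto x : EuclideanSpace ℝ V) := rfl
  rw [this, ← hyz, map_add,
    Submodule.orthogonalProjectionOnto_apply_of_mem_orthogonal hzS]
  rw [show S.orthogonalProjectionOnto y = ⟨y, hyS⟩ from
    Submodule.orthogonalProjectionOnto_mem_subspace_eq_self (⟨y, hyS⟩ : S)]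
  simp


lemma inner_Pmap (μ : ℝ) (u x : EuclideanSpace ℝ V) :
    (inner ℝ u (Pmap X μ x) : ℝ) = ∑ i ∈ Finset.univ.filter (fun i => evL X i = μ),
      (inner ℝ (evB X i) u : ℝ) * (inner ℝ (evB X i) x : ℝ) := by
  rw [Pmap_eq_sum, inner_sum]
  refine Finset.sum_congr rfl fun i _ => ?_
  rw [real_inner_smul_right, real_inner_comm u (evB X i)]; ring

lemma evB_inner_Pmap (i : Fin (Fintype.card V)) (x : EuclideanSpace ℝ V) :
    (inner ℝ (evB X i) (Pmap X (evL X i) x) : ℝ) = inner ℝ (evB X i) x := by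
  rw [inner_Pmap, Finset.sum_eq_single i]
  · rw [real_inner_self_eq_norm_sq, (evB X).orthonormal.1 i]
    simp
  · intro j hj hne
    rw [orthonormal_iff_ite.mp (evB X).orthonormal j i, if_neg hne]
    simp
  · simp

lemma inner_single_lapT (u v : V) :
    (inner ℝ (EuclideanSpace.single u (1:ℝ)) (lapT X (EuclideanSpace.single v 1)) : ℝ)
      = lapR X u v := by
  rw [lapT, Matrix.toEuclideanLin_apply, EuclideanSpace.inner_single_left]
  simp [Matrix.mulVec, dotProduct, Pi.single_apply]

lemma inner_lapT_expand (x y : EuclideanSpace ℝ V) :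
    (inner ℝ x (lapT X y) : ℝ) =
      ∑ i, evL X i * ((inner ℝ (evB X i) x : ℝ) * (inner ℝ (evB X i) y : ℝ)) := by
  rw [← (evB X).sum_inner_mul_inner x (lapT X y)]
  refine Finset.sum_congr rfl fun i _ => ?_
  rw [← (lapT_symmetric X) (evB X i) y, lapT_evB, real_inner_smul_left,
    real_inner_comm x (evB X i)]
  ring

lemma inner_Parseval (x y : EuclideanSpace ℝ V) :
    (inner ℝ x y : ℝ) = ∑ i, (inner ℝ (evB X i) x : ℝ) * (inner ℝ (evB X i) y : ℝ) := by
  rw [← (evB X).sum_inner_mul_inner x y]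
  refine Finset.sum_congr rfl fun i _ => ?_
  rw [real_inner_comm x (evB X i)]


/-- the all ones vector -/
noncomputable def onesE : EuclideanSpace ℝ V := (WithLp.equiv 2 (V → ℝ)).symm (fun _ => 1)

lemma lapT_onesE : lapT X (onesE (V := V)) = 0 := by
  letI := Classical.decRel X.Adj
  rw [lapT, onesE, Matrix.toEuclideanLin_apply]
  have : lapR X *ᵥ (WithLp.equiv 2 (V → ℝ)) ((WithLp.equiv 2 (V → ℝ)).symm fun _ => 1) = 0 := by
    simpa [lapR] using X.lapMatrix_mulVec_const_eq_zero (R := ℝ)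
  rw [show lapR X *ᵥ ((WithLp.equiv 2 (V → ℝ)).symm fun _ => 1).ofLp = 0 from this]
  simp

lemma onesE_mem : (onesE : EuclideanSpace ℝ V) ∈
    Module.End.eigenspace (Matrix.toEuclideanLin (lapR X)) 0 := by
  rw [Module.End.mem_eigenspace_iff, zero_smul]
  exact lapT_onesE X

lemma eigenspace_zero_const (hconn : X.Connected)
    (w : EuclideanSpace ℝ V)
    (hw : w ∈ Module.End.eigenspace (Matrix.toEuclideanLin (lapR X)) 0) (u v : V) :
    w u = w v := by
  letI := Classical.decRel X.Adj
  rw [Module.End.mem_eigenspace_iff, zero_smul] at hw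
  have h2 : Matrix.toLin' (X.lapMatrix ℝ) (WithLp.equiv 2 (V → ℝ) w) = 0 := by
    have := congrArg (WithLp.equiv 2 (V → ℝ)) hw
    rw [WithLp.equiv_apply, Matrix.ofLp_toEuclideanLin_apply] at this
    exact this
  exact X.lapMatrix_mulVec_eq_zero_iff_forall_reachable.mp
    (by rwa [Matrix.toLin'_apply] at h2) u v (hconn.preconnected u v)

lemma Pmap_zero_apply (hconn : X.Connected) (x : EuclideanSpace ℝ V) :
    Pmap X 0 x = ((∑ v, x v) / (Fintype.card V : ℝ)) • (onesE : EuclideanSpace ℝ V) := by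
  classical
  have hne : Nonempty V := hconn.nonempty
  have hn0 : (Fintype.card V : ℝ) ≠ 0 := by
    simp [Fintype.card_ne_zero]
  set S := Module.End.eigenspace (Matrix.toEuclideanLin (lapR X)) (0:ℝ) with hS
  set c : ℝ := (∑ v, x v) / (Fintype.card V : ℝ) with hc
  set y : EuclideanSpace ℝ V := c • (onesE : EuclideanSpace ℝ V) with hy
  set z : EuclideanSpace ℝ V := x - y with hz
  have hyS : y ∈ S := Submodule.smul_mem _ _ (onesE_mem X)
  have hones : ∀ v : V, (onesE : EuclideanSpace ℝ V) v = 1 := fun v => rfl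
  have hzS : z ∈ Sᗮ := by
    rw [Submodule.mem_orthogonal]
    intro w hw
    have hwc : ∀ v : V, w v = w (Classical.arbitrary V) := fun v =>
      eigenspace_zero_const X hconn w hw v _
    have : (inner ℝ w z : ℝ) = ∑ v, w v * z v := by
      rw [PiLp.inner_apply]; simp
      exact Finset.sum_congr rfl fun _ _ => mul_comm _ _
    rw [this]
    have : ∀ v : V, w v * z v = w (Classical.arbitrary V) * (x v - c) := by
      intro v
      rw [hwc v]
      congr 1
      simp [hz, hy, hones]
    rw [Finset.sum_congr rfl fun v _ => this v, ← Finset.mul_sum]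
    have : ∑ v : V, (x v - c) = 0 := by
      rw [Finset.sum_sub_distrib]
      simp [hc, Finset.sum_const, hn0]
      field_simp
      ring
    rw [this, mul_zero]
  have hx : x = y + z := by rw [hz]; abel
  have : Pmap X 0 x = (S.orthogonalProjectionOnto x : EuclideanSpace ℝ V) := rfl
  rw [this, hx, map_add,
    Submodule.orthogonalProjectionOnto_apply_of_mem_orthogonal hzS]
  rw [show S.orthogonalProjectionOnto y = ⟨y, hyS⟩ from
    Submodule.orthogonalProjectionOnto_mem_subspace_eq_self (⟨y, hyS⟩ : S)]
  simp [hy]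


/-- coefficients of the standard basis vector in the eigenvector basis -/
noncomputable def cf (a : V) : Fin (Fintype.card V) → ℝ :=
  fun i => inner ℝ (evB X i) (EuclideanSpace.single a 1)

lemma hEquiv_eq (x y : EuclideanSpace ℝ V) :
    WithLp.equiv 2 (V → ℝ) x = WithLp.equiv 2 (V → ℝ) y ↔ x = y :=
  Equiv.apply_eq_iff_eq _

lemma hEquiv_neg (x : EuclideanSpace ℝ V) :
    -(WithLp.equiv 2 (V → ℝ) x) = WithLp.equiv 2 (V → ℝ) (-x) := rfl

lemma hEquiv_zero : (0 : V → ℝ) = WithLp.equiv 2 (V → ℝ) (0 : EuclideanSpace ℝ V) := rfl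

lemma mem_phiPlus_iff (a b : V) (μ : ℝ) :
    μ ∈ PhiPlus X a b ↔ (Pmap X μ (EuclideanSpace.single a 1) =
      Pmap X μ (EuclideanSpace.single b 1) ∧
      Pmap X μ (EuclideanSpace.single a 1) ≠ 0) := by
  have hinj := (WithLp.equiv 2 (V → ℝ)).injective
  show (_ ∧ _) ↔ _
  constructor
  · rintro ⟨h1, h2⟩
    rw [bridge, bridge] at h1
    refine ⟨hinj h1, fun hz => ?_⟩
    apply h2
    rw [bridge, hz]
    rfl
  · rintro ⟨h1, h2⟩
    refine ⟨by rw [bridge, bridge, h1], ?_⟩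
    rw [bridge]
    intro hz
    exact h2 (hinj hz)

lemma mem_phiMinus_iff (a b : V) (μ : ℝ) :
    μ ∈ PhiMinus X a b ↔ (Pmap X μ (EuclideanSpace.single a 1) =
      -Pmap X μ (EuclideanSpace.single b 1) ∧
      Pmap X μ (EuclideanSpace.single a 1) ≠ 0) := by
  have hinj := (WithLp.equiv 2 (V → ℝ)).injective
  show (_ ∧ _) ↔ _
  constructor
  · rintro ⟨h1, h2⟩
    rw [bridge, bridge, hEquiv_neg] at h1
    refine ⟨hinj h1, fun hz => ?_⟩
    apply h2
    rw [bridge, hz]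
    rfl
  · rintro ⟨h1, h2⟩
    refine ⟨by rw [bridge, bridge, hEquiv_neg, h1], ?_⟩
    rw [bridge]
    intro hz
    exact h2 (hinj hz)

lemma phi_disjoint (a b : V) (μ : ℝ) (h1 : μ ∈ PhiPlus X a b)
    (h2 : μ ∈ PhiMinus X a b) : False := by
  rw [mem_phiPlus_iff] at h1
  rw [mem_phiMinus_iff] at h2
  obtain ⟨e1, ne1⟩ := h1
  obtain ⟨e2, _⟩ := h2
  apply ne1
  have h3 : (2:ℝ) • Pmap X μ (EuclideanSpace.single a 1) = 0 := by
    rw [two_smul]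
    nth_rewrite 1 [e1]
    rw [e2]
    abel
  simpa using (smul_eq_zero.mp h3).resolve_left (by norm_num)

lemma cf_eq_zero_of_Pmap {a : V} {i : Fin (Fintype.card V)}
    (h : Pmap X (evL X i) (EuclideanSpace.single a 1) = 0) : cf X a i = 0 := by
  have h2 := evB_inner_Pmap X i (EuclideanSpace.single a (1:ℝ))
  rw [h, inner_zero_right] at h2
  exact h2.symm

lemma classify (a b : V) (hsc : StronglyCospectral X a b) (i : Fin (Fintype.card V)) :
    (evL X i ∈ PhiPlus X a b ∧ cf X b i = cf X a i) ∨
    (evL X i ∈ PhiMinus X a b ∧ cf X b i = -cf X a i) ∨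
    (cf X a i = 0 ∧ cf X b i = 0) := by
  set μ := evL X i with hμ
  have hsc' : Pmap X μ (EuclideanSpace.single a 1) = Pmap X μ (EuclideanSpace.single b 1) ∨
      Pmap X μ (EuclideanSpace.single a 1) = -Pmap X μ (EuclideanSpace.single b 1) := by
    have hinj := (WithLp.equiv 2 (V → ℝ)).injective
    rcases hsc μ with h | h
    · left
      rw [bridge, bridge] at h
      exact hinj h
    · right
      rw [bridge, bridge, hEquiv_neg] at h
      exact hinj h
  by_cases h0 : Pmap X μ (EuclideanSpace.single a 1) = 0
  · right; right
    refine ⟨cf_eq_zero_of_Pmap X h0, cf_eq_zero_of_Pmap X ?_⟩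
    rcases hsc' with h | h
    · rw [← h]; exact h0
    · rw [h0] at h
      exact neg_eq_zero.mp h.symm
  · rcases hsc' with h | h
    · left
      refine ⟨(mem_phiPlus_iff X a b μ).mpr ⟨h, h0⟩, ?_⟩
      have h2 := evB_inner_Pmap X i (EuclideanSpace.single a (1:ℝ))
      rw [← hμ, h, evB_inner_Pmap] at h2
      exact h2
    · right; left
      refine ⟨(mem_phiMinus_iff X a b μ).mpr ⟨h, h0⟩, ?_⟩
      have h2 := evB_inner_Pmap X i (EuclideanSpace.single a (1:ℝ))
      rw [← hμ, h, inner_neg_right, evB_inner_Pmap] at h2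
      have : cf X b i = - cf X a i := by
        rw [cf, cf, ← h2]
        ring
      exact this

lemma sum_cf_mul (a b : V) :
    ∑ i, cf X a i * cf X b i = if a = b then 1 else 0 := by
  have h := inner_Parseval X (EuclideanSpace.single a (1:ℝ)) (EuclideanSpace.single b 1)
  rw [EuclideanSpace.inner_single_left] at h
  rw [show ∑ i, cf X a i * cf X b i = ∑ i, (inner ℝ (evB X i) (EuclideanSpace.single a (1:ℝ)) : ℝ) * (inner ℝ (evB X i) (EuclideanSpace.single b (1:ℝ)) : ℝ) from rfl, ← h]
  simp [EuclideanSpace.single_apply, eq_comm]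

lemma sum_evL_cf_mul (a b : V) :
    ∑ i, evL X i * (cf X a i * cf X b i) = lapR X a b := by
  have h := inner_lapT_expand X (EuclideanSpace.single a (1:ℝ)) (EuclideanSpace.single b 1)
  rw [inner_single_lapT] at h
  exact h.symm

lemma zero_mem_phiPlus (hconn : X.Connected) (a b : V) : (0:ℝ) ∈ PhiPlus X a b := by
  have hne : Nonempty V := hconn.nonempty
  have hn0 : (Fintype.card V : ℝ) ≠ 0 := by
    simp [Fintype.card_ne_zero]
  have hsum : ∀ v : V, (∑ u, (EuclideanSpace.single v (1:ℝ)) u) = 1 := by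
    intro v
    simp [EuclideanSpace.single_apply]
  rw [mem_phiPlus_iff]
  constructor
  · rw [Pmap_zero_apply X hconn, Pmap_zero_apply X hconn, hsum, hsum]
  · rw [Pmap_zero_apply X hconn, hsum]
    intro hcon
    rcases smul_eq_zero.mp hcon with h | h
    · rw [div_eq_zero_iff] at h
      rcases h with h | h
      · exact one_ne_zero h
      · exact hn0 h
    · have h4 := congrFun (congrArg (WithLp.equiv 2 (V → ℝ)) h) (Classical.arbitrary V)
      simpa [onesE] using h4

lemma sum_zero_fiber (hconn : X.Connected) (a : V) :
    ∑ i ∈ Finset.univ.filter (fun i => evL X i = 0), cf X a i * cf X a i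
      = 1 / (Fintype.card V : ℝ) := by
  have hne : Nonempty V := hconn.nonempty
  have hn0 : (Fintype.card V : ℝ) ≠ 0 := by
    simp [Fintype.card_ne_zero]
  have h := inner_Pmap X 0 (EuclideanSpace.single a (1:ℝ)) (EuclideanSpace.single a 1)
  have hL : (inner ℝ (EuclideanSpace.single a (1:ℝ)) (Pmap X 0 (EuclideanSpace.single a 1)) : ℝ)
      = 1 / (Fintype.card V : ℝ) := by
    rw [Pmap_zero_apply X hconn, real_inner_smul_right]
    have h1 : (∑ u, (EuclideanSpace.single a (1:ℝ)) u) = 1 := by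
      simp [EuclideanSpace.single_apply]
    have h2 : (inner ℝ (EuclideanSpace.single a (1:ℝ)) (onesE : EuclideanSpace ℝ V) : ℝ) = 1 := by
      rw [EuclideanSpace.inner_single_left]
      simp [onesE]
    rw [h1, h2]
    ring
  rw [hL] at h
  exact h.symm

lemma lapR_diag (a : V) : lapR X a a = ((X.neighborSet a).ncard : ℝ) := by
  letI := Classical.decRel X.Adj
  have h1 : (X.neighborSet a).ncard = X.degree a := by
    rw [← Nat.card_coe_set_eq, Nat.card_eq_fintype_card]
    exact X.card_neighborSet_eq_degree a
  show (X.lapMatrix ℝ) a a = _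
  rw [h1]
  simp [SimpleGraph.lapMatrix, SimpleGraph.degMatrix]

lemma lapR_adj {a b : V} (hab : a ≠ b) (h : X.Adj a b) : lapR X a b = -1 := by
  letI := Classical.decRel X.Adj
  show (X.lapMatrix ℝ) a b = -1
  simp [SimpleGraph.lapMatrix, SimpleGraph.degMatrix, Matrix.sub_apply,
    Matrix.diagonal_apply_ne _ hab, h]

lemma lapR_nonadj {a b : V} (hab : a ≠ b) (h : ¬ X.Adj a b) : lapR X a b = 0 := by
  letI := Classical.decRel X.Adj
  show (X.lapMatrix ℝ) a b = 0
  simp [SimpleGraph.lapMatrix, SimpleGraph.degMatrix, Matrix.sub_apply,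
    Matrix.diagonal_apply_ne _ hab, h]

lemma sum_split {α : Type*} [Fintype α] [DecidableEq α] (s t : Finset α) (hd : Disjoint s t)
    (f : α → ℝ) (h : ∀ i, i ∉ s → i ∉ t → f i = 0) :
    ∑ i, f i = ∑ i ∈ s, f i + ∑ i ∈ t, f i := by
  rw [← Finset.sum_union hd]
  apply (Finset.sum_subset (Finset.subset_univ _) ?_).symm
  intro i _ hi
  rw [Finset.mem_union] at hi
  push_neg at hi
  exact h i hi.1 hi.2

end Aux

/-- Degree bounds for Laplacian strongly cospectral vertices in
terms of the extreme elements of `Φ⁺` and `Φ⁻`. -/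
theorem degree_bounds {V : Type*} [Fintype V] [DecidableEq V]
    (X : SimpleGraph V) (hconn : X.Connected) (a b : V)
    (hsc : StronglyCospectral X a b)
    (θp θm lp lm : ℝ)
    (hθp : IsGreatest (PhiPlus X a b) θp)
    (hθm : IsGreatest (PhiMinus X a b) θm)
    (hlp : IsLeast (PhiPlus X a b ∩ {μ | μ ≠ 0}) lp)
    (hlm : IsLeast (PhiMinus X a b ∩ {μ | μ ≠ 0}) lm) :
    (¬ X.Adj a b →
      max (((Fintype.card V : ℝ) - 2) / (Fintype.card V : ℝ) * lp) lm ≤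
          ((X.neighborSet a).ncard : ℝ) ∧
      ((X.neighborSet a).ncard : ℝ) ≤
        min (((Fintype.card V : ℝ) - 2) / (Fintype.card V : ℝ) * θp) θm) ∧
    (X.Adj a b →
      max (((Fintype.card V : ℝ) - 2) / (Fintype.card V : ℝ) * lp + 1) (lm - 1) ≤
          ((X.neighborSet a).ncard : ℝ) ∧
      ((X.neighborSet a).ncard : ℝ) ≤
        min (((Fintype.card V : ℝ) - 2) / (Fintype.card V : ℝ) * θp + 1) (θm - 1)) := by
  classical
  have hne : Nonempty V := hconn.nonempty
  have hn0 : (Fintype.card V : ℝ) ≠ 0 := by simp [Fintype.card_ne_zero]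
  -- `a ≠ b`
  have hθm_mem := (mem_phiMinus_iff X a b θm).mp hθm.1
  have hab : a ≠ b := by
    intro h
    subst h
    obtain ⟨e1, ne1⟩ := hθm_mem
    apply ne1
    have h3 : (2:ℝ) • Pmap X θm (EuclideanSpace.single a 1) = 0 := by
      rw [two_smul]
      nth_rewrite 1 [e1]
      abel
    simpa using (smul_eq_zero.mp h3).resolve_left (by norm_num)
  set Sp : Finset (Fin (Fintype.card V)) :=
    Finset.univ.filter (fun i => evL X i ∈ PhiPlus X a b) with hSp
  set Sm : Finset (Fin (Fintype.card V)) :=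
    Finset.univ.filter (fun i => evL X i ∈ PhiMinus X a b) with hSm
  set Z : Finset (Fin (Fintype.card V)) :=
    Finset.univ.filter (fun i => evL X i = 0) with hZ
  have hdisj : Disjoint Sp Sm := by
    rw [Finset.disjoint_left]
    intro i hi1 hi2
    rw [hSp, Finset.mem_filter] at hi1
    rw [hSm, Finset.mem_filter] at hi2
    exact phi_disjoint X a b _ hi1.2 hi2.2
  have hSpd : ∀ i ∈ Sp, cf X b i = cf X a i := by
    intro i hi
    rw [hSp, Finset.mem_filter] at hi
    rcases classify X a b hsc i with ⟨_, h⟩ | ⟨h2, _⟩ | ⟨h1, h2⟩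
    · exact h
    · exact absurd (phi_disjoint X a b _ hi.2 h2) id
    · rw [h1, h2]
  have hSmd : ∀ i ∈ Sm, cf X b i = -cf X a i := by
    intro i hi
    rw [hSm, Finset.mem_filter] at hi
    rcases classify X a b hsc i with ⟨h2, _⟩ | ⟨_, h⟩ | ⟨h1, h2⟩
    · exact absurd (phi_disjoint X a b _ h2 hi.2) id
    · exact h
    · rw [h1, h2]; ring
  have hOut : ∀ i, i ∉ Sp → i ∉ Sm → cf X a i = 0 := by
    intro i h1 h2
    rw [hSp] at h1; rw [hSm] at h2
    simp only [Finset.mem_filter, Finset.mem_univ, true_and] at h1 h2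
    rcases classify X a b hsc i with ⟨h, _⟩ | ⟨h, _⟩ | ⟨h, _⟩
    · exact absurd h h1
    · exact absurd h h2
    · exact h
  -- sum identities
  have hA : ∑ i ∈ Sp, cf X a i * cf X a i + ∑ i ∈ Sm, cf X a i * cf X a i = 1 := by
    rw [← sum_split Sp Sm hdisj _ (fun i h1 h2 => by rw [hOut i h1 h2]; ring)]
    rw [sum_cf_mul]
    simp
  have hB : ∑ i ∈ Sp, cf X a i * cf X a i - ∑ i ∈ Sm, cf X a i * cf X a i = 0 := by
    have h := sum_split Sp Sm hdisj (fun i => cf X a i * cf X b i)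
      (fun i h1 h2 => by simp only [hOut i h1 h2, zero_mul, mul_zero])
    rw [sum_cf_mul, if_neg hab] at h
    have e1 : ∑ i ∈ Sp, cf X a i * cf X b i = ∑ i ∈ Sp, cf X a i * cf X a i :=
      Finset.sum_congr rfl (fun i hi => by rw [hSpd i hi])
    have e2 : ∑ i ∈ Sm, cf X a i * cf X b i = -∑ i ∈ Sm, cf X a i * cf X a i := by
      rw [← Finset.sum_neg_distrib]
      exact Finset.sum_congr rfl (fun i hi => by rw [hSmd i hi]; ring)
    rw [e1, e2] at h
    linarith
  have hC : ∑ i ∈ Sp, evL X i * (cf X a i * cf X a i)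
      + ∑ i ∈ Sm, evL X i * (cf X a i * cf X a i) = ((X.neighborSet a).ncard : ℝ) := by
    rw [← sum_split Sp Sm hdisj _ (fun i h1 h2 => by rw [hOut i h1 h2]; ring)]
    rw [sum_evL_cf_mul, lapR_diag]
  have hD : ∑ i ∈ Sp, evL X i * (cf X a i * cf X a i)
      - ∑ i ∈ Sm, evL X i * (cf X a i * cf X a i) = lapR X a b := by
    have h := sum_split Sp Sm hdisj (fun i => evL X i * (cf X a i * cf X b i))
      (fun i h1 h2 => by simp only [hOut i h1 h2, zero_mul, mul_zero])
    rw [sum_evL_cf_mul] at h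
    have e1 : ∑ i ∈ Sp, evL X i * (cf X a i * cf X b i)
        = ∑ i ∈ Sp, evL X i * (cf X a i * cf X a i) :=
      Finset.sum_congr rfl (fun i hi => by rw [hSpd i hi])
    have e2 : ∑ i ∈ Sm, evL X i * (cf X a i * cf X b i)
        = -∑ i ∈ Sm, evL X i * (cf X a i * cf X a i) := by
      rw [← Finset.sum_neg_distrib]
      exact Finset.sum_congr rfl (fun i hi => by rw [hSmd i hi]; ring)
    rw [e1, e2] at h
    linarith
  -- the zero fiber
  have hZsub : Z ⊆ Sp := by
    intro i hi
    rw [hZ, Finset.mem_filter] at hi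
    rw [hSp, Finset.mem_filter]
    refine ⟨Finset.mem_univ i, ?_⟩
    rw [hi.2]
    exact zero_mem_phiPlus X hconn a b
  have hZsum : ∑ i ∈ Z, cf X a i * cf X a i = 1 / (Fintype.card V : ℝ) :=
    sum_zero_fiber X hconn a
  have hSpZ : ∑ i ∈ Sp, cf X a i * cf X a i
      = 1/(Fintype.card V : ℝ) + ∑ i ∈ Sp \ Z, cf X a i * cf X a i := by
    rw [← hZsum, add_comm]
    exact (Finset.sum_sdiff hZsub).symm
  have hSpZD : ∑ i ∈ Sp, evL X i * (cf X a i * cf X a i)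
      = ∑ i ∈ Sp \ Z, evL X i * (cf X a i * cf X a i) := by
    have hz : ∑ i ∈ Z, evL X i * (cf X a i * cf X a i) = 0 :=
      Finset.sum_eq_zero (fun i hi => by
        rw [hZ, Finset.mem_filter] at hi
        rw [hi.2]; ring)
    rw [← Finset.sum_sdiff hZsub, hz, add_zero]
  -- bounds
  have hbm1 : lm * ∑ i ∈ Sm, cf X a i * cf X a i
      ≤ ∑ i ∈ Sm, evL X i * (cf X a i * cf X a i) := by
    rw [Finset.mul_sum]
    apply Finset.sum_le_sum
    intro i hi
    rw [hSm, Finset.mem_filter] at hi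
    have hne0 : evL X i ≠ 0 := by
      intro h
      refine phi_disjoint X a b (evL X i) ?_ hi.2
      rw [h]
      exact zero_mem_phiPlus X hconn a b
    exact mul_le_mul_of_nonneg_right (hlm.2 ⟨hi.2, hne0⟩) (mul_self_nonneg _)
  have hbm2 : ∑ i ∈ Sm, evL X i * (cf X a i * cf X a i)
      ≤ θm * ∑ i ∈ Sm, cf X a i * cf X a i := by
    rw [Finset.mul_sum]
    apply Finset.sum_le_sum
    intro i hi
    rw [hSm, Finset.mem_filter] at hi
    exact mul_le_mul_of_nonneg_right (hθm.2 hi.2) (mul_self_nonneg _)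
  have hbp1 : lp * ∑ i ∈ Sp \ Z, cf X a i * cf X a i
      ≤ ∑ i ∈ Sp \ Z, evL X i * (cf X a i * cf X a i) := by
    rw [Finset.mul_sum]
    apply Finset.sum_le_sum
    intro i hi
    rw [Finset.mem_sdiff, hSp, Finset.mem_filter, hZ, Finset.mem_filter] at hi
    have hmem : evL X i ∈ PhiPlus X a b ∩ {μ : ℝ | μ ≠ 0} :=
      ⟨hi.1.2, fun h => hi.2 ⟨Finset.mem_univ i, h⟩⟩
    exact mul_le_mul_of_nonneg_right (hlp.2 hmem) (mul_self_nonneg _)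
  have hbp2 : ∑ i ∈ Sp \ Z, evL X i * (cf X a i * cf X a i)
      ≤ θp * ∑ i ∈ Sp \ Z, cf X a i * cf X a i := by
    rw [Finset.mul_sum]
    apply Finset.sum_le_sum
    intro i hi
    rw [Finset.mem_sdiff, hSp, Finset.mem_filter] at hi
    exact mul_le_mul_of_nonneg_right (hθp.2 hi.1.2) (mul_self_nonneg _)
  -- abbreviate the sums
  set qp := ∑ i ∈ Sp, cf X a i * cf X a i with hqp_def
  set qm := ∑ i ∈ Sm, cf X a i * cf X a i with hqm_def
  set qz := ∑ i ∈ Sp \ Z, cf X a i * cf X a i with hqz_def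
  set dp := ∑ i ∈ Sp, evL X i * (cf X a i * cf X a i) with hdp_def
  set dm := ∑ i ∈ Sm, evL X i * (cf X a i * cf X a i) with hdm_def
  set dz := ∑ i ∈ Sp \ Z, evL X i * (cf X a i * cf X a i) with hdz_def
  have hqm : qm = 1/2 := by linarith
  have hqz : qz = 1/2 - 1/(Fintype.card V : ℝ) := by linarith
  rw [hqm] at hbm1 hbm2
  rw [hqz] at hbp1 hbp2
  rw [hSpZD] at hC hD
  have hkeyl : ((Fintype.card V : ℝ) - 2)/(Fintype.card V : ℝ) * lp
      = 2 * (lp * (1/2 - 1/(Fintype.card V : ℝ))) := by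
    field_simp
  have hkeyt : ((Fintype.card V : ℝ) - 2)/(Fintype.card V : ℝ) * θp
      = 2 * (θp * (1/2 - 1/(Fintype.card V : ℝ))) := by
    field_simp
  constructor
  · intro hnadj
    rw [lapR_nonadj X hab hnadj] at hD
    constructor
    · apply max_le
      · rw [hkeyl]
        linarith
      · linarith
    · apply le_min
      · rw [hkeyt]
        linarith
      · linarith
  · intro hadj
    rw [lapR_adj X hab hadj] at hD
    constructor
    · apply max_le
      · rw [hkeyl]
        linarith
      · linarith
    · apply le_min
      · rw [hkeyt]
        linarith
      · linarith
end

section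
/- Let X be a finite simple graph. If X admits proper Laplacian fractional revival between distinct vertices a and b at some time τ, then a and b are Laplacian strongly cospectral, i.e., for every μ ∈ ℝ, F_μ e_a = F_μ e_b or F_μ e_a = −F_μ e_b. -/
open Matrix

section AuxFR

open RealInnerProductSpace Nat

variable {V : Type*} [Fintype V] [DecidableEq V]

private lemma exp_linear_eigen {W : Type*} [AddCommGroup W] [Module ℂ W]
    [TopologicalSpace W] [IsTopologicalAddGroup W] [T2Space W] [ContinuousSMul ℂ W]
    (B : Matrix V V ℂ) (s : ℂ) (f : Matrix V V ℂ →ₗ[ℂ] W) (w : W)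
    (hf : ∀ n : ℕ, f (B ^ n) = s ^ n • w) :
    f (NormedSpace.exp B) = Complex.exp s • w := by
  letI : SeminormedRing (Matrix V V ℂ) := Matrix.linftyOpSemiNormedRing
  letI : NormedRing (Matrix V V ℂ) := Matrix.linftyOpNormedRing
  letI : NormedAlgebra ℂ (Matrix V V ℂ) := Matrix.linftyOpNormedAlgebra
  have key : f (NormedSpace.exp B) = Complex.exp s • w := by
    have hcont : Continuous f := LinearMap.continuous_of_finiteDimensional f
    let fc : Matrix V V ℂ →L[ℂ] W := ⟨f, hcont⟩
    let g : ℂ →L[ℂ] W := (ContinuousLinearMap.id ℂ ℂ).smulRight w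
    have hsum : Summable (fun n : ℕ => (n !⁻¹ : ℂ) • B ^ n) :=
      NormedSpace.expSeries_summable' B
    have hsum2 : Summable (fun n : ℕ => (n !⁻¹ : ℂ) • s ^ n) :=
      NormedSpace.expSeries_summable' s
    calc f (NormedSpace.exp B) = fc (∑' n : ℕ, (n !⁻¹ : ℂ) • B ^ n) := by
          rw [NormedSpace.exp_eq_tsum ℂ]; rfl
      _ = ∑' n : ℕ, fc ((n !⁻¹ : ℂ) • B ^ n) := fc.map_tsum hsum
      _ = ∑' n : ℕ, g ((n !⁻¹ : ℂ) • s ^ n) := by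
          refine tsum_congr fun n => ?_
          simp only [fc, g, ContinuousLinearMap.coe_mk', LinearMap.map_smul, hf n,
            ContinuousLinearMap.smulRight_apply, ContinuousLinearMap.id_apply,
            smul_eq_mul, smul_smul]
      _ = g (∑' n : ℕ, (n !⁻¹ : ℂ) • s ^ n) := (g.map_tsum hsum2).symm
      _ = Complex.exp s • w := by
          have hs : (∑' n : ℕ, (n !⁻¹ : ℂ) • s ^ n) = Complex.exp s := by
            rw [Complex.exp_eq_exp_ℂ, NormedSpace.exp_eq_tsum ℂ]
          rw [hs]
          simp [g]
  exact key

private lemma exp_mulVec_eigen (B : Matrix V V ℂ) (v : V → ℂ) (s : ℂ)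
    (h : B *ᵥ v = s • v) :
    NormedSpace.exp B *ᵥ v = Complex.exp s • v := by
  have hf : ∀ n : ℕ, B ^ n *ᵥ v = s ^ n • v := by
    intro n
    induction n with
    | zero => simp
    | succ n ih =>
      rw [pow_succ, ← Matrix.mulVec_mulVec, h, Matrix.mulVec_smul, ih, smul_smul]
      have hss : s * s ^ n = s ^ (n + 1) := by ring
      rw [hss]
  let f : Matrix V V ℂ →ₗ[ℂ] (V → ℂ) :=
    { toFun := fun M => M *ᵥ v
      map_add' := fun M N => Matrix.add_mulVec M N v
      map_smul' := fun c M => Matrix.smul_mulVec c M v }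
  exact exp_linear_eigen B s f v hf

private lemma mul_exp_eigen (B F : Matrix V V ℂ) (s : ℂ) (h : F * B = s • F) :
    F * NormedSpace.exp B = Complex.exp s • F := by
  have hf : ∀ n : ℕ, F * B ^ n = s ^ n • F := by
    intro n
    induction n with
    | zero => simp
    | succ n ih =>
      rw [pow_succ, ← mul_assoc, ih, Matrix.smul_mul, h, smul_smul]
      have hss : s ^ n * s = s ^ (n + 1) := by ring
      rw [hss]
  let f : Matrix V V ℂ →ₗ[ℂ] Matrix V V ℂ :=
    { toFun := fun M => F * M
      map_add' := fun M N => Matrix.mul_add F M N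
      map_smul' := fun c M => Matrix.mul_smul F c M }
  exact exp_linear_eigen B s f F hf

private lemma ofReal_fun_mulVec (A : Matrix V V ℝ) (v : V → ℝ) :
    A.map Complex.ofReal *ᵥ (fun i => ((v i : ℝ) : ℂ)) = fun i => (((A *ᵥ v) i : ℝ) : ℂ) := by
  funext i
  exact (RingHom.map_mulVec Complex.ofRealHom A v i).symm

private lemma single_ofReal (a : V) :
    (Pi.single a 1 : V → ℂ) = fun i => (((Pi.single a 1 : V → ℝ) i : ℝ) : ℂ) := by
  funext i
  by_cases h : i = a
  · subst h; simp
  · simp [Pi.single_eq_of_ne h]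

private lemma star_single (a : V) : star (Pi.single a 1 : V → ℂ) = Pi.single a 1 := by
  funext i
  by_cases h : i = a
  · subst h; simp
  · simp [Pi.single_eq_of_ne h]

private lemma lapR_isSymm_s7 (G : SimpleGraph V) : (lapR G).IsSymm := by
  letI := Classical.decRel G.Adj
  exact G.isSymm_lapMatrix (R := ℝ)

private lemma lapR_mulVec_ones (G : SimpleGraph V) : lapR G *ᵥ (fun _ => (1 : ℝ)) = 0 := by
  letI := Classical.decRel G.Adj
  exact G.lapMatrix_mulVec_const_eq_zero

private lemma eigProj_comm (G : SimpleGraph V) (μ : ℝ) :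
    eigProj G μ * lapR G = μ • eigProj G μ ∧ lapR G * eigProj G μ = μ • eigProj G μ := by
  classical
  set T := Matrix.toEuclideanLin (lapR G) with hT
  set K := Module.End.eigenspace T μ with hK
  have hherm : (lapR G).IsHermitian := by
    unfold Matrix.IsHermitian
    rw [Matrix.conjTranspose_eq_transpose_of_trivial]
    exact lapR_isSymm_s7 G
  have hsymT : T.IsSymmetric := Matrix.isHermitian_iff_isSymmetric.mp hherm
  set Q : EuclideanSpace ℝ V →ₗ[ℝ] EuclideanSpace ℝ V :=
    K.subtype ∘ₗ (Submodule.orthogonalProjectionOnto K : EuclideanSpace ℝ V →L[ℝ] K).toLinearMap with hQ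
  have hproj : ∀ x : EuclideanSpace ℝ V,
      Q x = ((Submodule.orthogonalProjectionOnto K x : K) : EuclideanSpace ℝ V) := fun _ => rfl
  have hQmem : ∀ x, Q x ∈ K := by
    intro x; rw [hproj]; exact SetLike.coe_mem _
  have hTQ : ∀ x, T (Q x) = μ • Q x := by
    intro x
    exact Module.End.mem_eigenspace_iff.mp (hQmem x)
  have hQT : ∀ x, Q (T x) = μ • Q x := by
    intro x
    have hdecomp : T (Q x) + T (x - Q x) = T x := by
      rw [← map_add]; congr 1; abel
    have h2 : T (x - Q x) ∈ Kᗮ := by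
      have hm : x - Q x ∈ Kᗮ := by
        rw [hproj]; exact Submodule.sub_starProjection_mem_orthogonal x
      rw [Submodule.mem_orthogonal] at hm ⊢
      intro u hu
      have hTu : T u = μ • u := Module.End.mem_eigenspace_iff.mp hu
      calc ⟪u, T (x - Q x)⟫ = ⟪T u, x - Q x⟫ := (hsymT u _).symm
        _ = μ * ⟪u, x - Q x⟫ := by rw [hTu, real_inner_smul_left]
        _ = 0 := by rw [hm u hu, mul_zero]
    have e2 : Q (T (x - Q x)) = 0 := by
      rw [hproj, Submodule.orthogonalProjectionOnto_apply_of_mem_orthogonal h2,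
        Submodule.coe_zero]
    have hQQ : Q (Q x) = Q x := by
      have : Submodule.orthogonalProjectionOnto K ((Submodule.orthogonalProjectionOnto K x : K) : EuclideanSpace ℝ V)
          = Submodule.orthogonalProjectionOnto K x :=
        Submodule.orthogonalProjectionOnto_mem_subspace_eq_self _
      rw [hproj, hproj, this]
    calc Q (T x) = Q (T (Q x) + T (x - Q x)) := by rw [hdecomp]
      _ = Q (T (Q x)) + Q (T (x - Q x)) := map_add Q _ _
      _ = Q (μ • Q x) + 0 := by rw [hTQ x, e2]
      _ = μ • Q (Q x) := by rw [add_zero, _root_.map_smul]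
      _ = μ • Q x := by rw [hQQ]
  have hQe : Matrix.toEuclideanLin (eigProj G μ) = Q :=
    (Matrix.toEuclideanLin (𝕜 := ℝ) (m := V) (n := V)).apply_symm_apply Q
  have hmul : ∀ A B : Matrix V V ℝ, Matrix.toEuclideanLin (A * B) =
      (Matrix.toEuclideanLin A).comp (Matrix.toEuclideanLin B) := by
    intro A B
    rw [Matrix.toEuclideanLin_eq_toLin]
    exact Matrix.toLin_mul _ _ _ A B
  constructor
  · apply (Matrix.toEuclideanLin (𝕜 := ℝ) (m := V) (n := V)).injective
    rw [hmul, hQe, _root_.map_smul, hQe, ← hT]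
    exact LinearMap.ext hQT
  · apply (Matrix.toEuclideanLin (𝕜 := ℝ) (m := V) (n := V)).injective
    rw [hmul, hQe, _root_.map_smul, hQe, ← hT]
    exact LinearMap.ext hTQ

end AuxFR

/-- Proper Laplacian fractional revival between `a` and `b`
implies that `a` and `b` are Laplacian strongly cospectral. -/
theorem properLaFR_stronglyCospectral {V : Type*} [Fintype V] [DecidableEq V]
    (X : SimpleGraph V) (a b : V) (τ : ℝ) (h : properLaFR X a b τ) :
    StronglyCospectral X a b := by
  obtain ⟨hab, α, β, hβ, hU⟩ := h
  intro μ
  classical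
  set F : Matrix V V ℝ := eigProj X μ with hF
  set Fc : Matrix V V ℂ := F.map Complex.ofReal with hFcdef
  have hcomm := eigProj_comm X μ
  have hmapmul : ∀ A B : Matrix V V ℝ,
      (A * B).map Complex.ofReal = A.map Complex.ofReal * B.map Complex.ofReal := by
    intro A B
    exact Matrix.map_mul (f := Complex.ofRealHom)
  have hmapsmul : ∀ (c : ℝ) (A : Matrix V V ℝ),
      ((c • A).map Complex.ofReal) = (c : ℂ) • A.map Complex.ofReal := by
    intro c A; ext i j
    simp [Matrix.map_apply, Matrix.smul_apply, smul_eq_mul]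
  have hFLc : Fc * lapC X = (μ : ℂ) • Fc := by
    rw [hFcdef]
    show F.map Complex.ofReal * (lapR X).map Complex.ofReal = _
    rw [← hmapmul, hcomm.1, hmapsmul]
  have hFB : Fc * ((Complex.I * (τ : ℂ)) • lapC X) = (Complex.I * τ * μ) • Fc := by
    rw [Matrix.mul_smul, hFLc, smul_smul]
  have hFU : Fc * transition X τ = Complex.exp (Complex.I * τ * μ) • Fc :=
    mul_exp_eigen ((Complex.I * (τ : ℂ)) • lapC X) Fc (Complex.I * τ * μ) hFB
  set xr : V → ℝ := F *ᵥ Pi.single a 1 with hxr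
  set yr : V → ℝ := F *ᵥ Pi.single b 1 with hyr
  set xc : V → ℂ := Fc *ᵥ Pi.single a 1 with hxc
  set yc : V → ℂ := Fc *ᵥ Pi.single b 1 with hyc
  set lam : ℂ := Complex.exp (Complex.I * τ * μ) with hlamdef
  have Eq1 : lam • xc = α • xc + β • yc := by
    have e := congrArg (fun w => Fc *ᵥ w) hU
    rw [Matrix.mulVec_mulVec, hFU, Matrix.smul_mulVec, Matrix.mulVec_add,
      Matrix.mulVec_smul, Matrix.mulVec_smul] at e
    exact e
  have hxcast : xc = fun i => ((xr i : ℝ) : ℂ) := by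
    rw [hxc, single_ofReal a, hFcdef, ofReal_fun_mulVec, hxr]
  have hycast : yc = fun i => ((yr i : ℝ) : ℂ) := by
    rw [hyc, single_ofReal b, hFcdef, ofReal_fun_mulVec, hyr]
  have hxreal : ∀ i, (starRingEnd ℂ) (xc i) = xc i := by
    intro i; rw [hxcast]; exact Complex.conj_ofReal _
  have hyreal : ∀ i, (starRingEnd ℂ) (yc i) = yc i := by
    intro i; rw [hycast]; exact Complex.conj_ofReal _
  have Eq2 : (starRingEnd ℂ) lam • xc = (starRingEnd ℂ) α • xc + (starRingEnd ℂ) β • yc := by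
    funext i
    have e := congrArg (starRingEnd ℂ) (congrFun Eq1 i)
    simp only [Pi.smul_apply, Pi.add_apply, smul_eq_mul, map_add, _root_.map_mul] at e
    rw [hxreal i, hyreal i] at e
    simpa [Pi.smul_apply, Pi.add_apply, smul_eq_mul] using e
  -- the all-ones vector is fixed
  have hones : transition X τ *ᵥ (fun _ => (1 : ℂ)) = fun _ => (1 : ℂ) := by
    have hB1 : ((Complex.I * (τ : ℂ)) • lapC X) *ᵥ (fun _ => (1 : ℂ))
        = (0 : ℂ) • (fun _ => (1 : ℂ)) := by
      rw [Matrix.smul_mulVec]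
      have h0 : lapC X *ᵥ (fun _ => (1 : ℂ)) = 0 := by
        have h1 := ofReal_fun_mulVec (lapR X) (fun _ => (1 : ℝ))
        rw [lapR_mulVec_ones X] at h1
        show (lapR X).map Complex.ofReal *ᵥ (fun _ => (1 : ℂ)) = 0
        simpa [Pi.zero_def] using h1
      rw [h0, smul_zero, zero_smul]
    have := exp_mulVec_eigen _ _ _ hB1
    simpa [transition] using this
  have hLsym := lapR_isSymm_s7 X
  have hLcsym : (lapC X)ᵀ = lapC X := by
    show ((lapR X).map Complex.ofReal)ᵀ = (lapR X).map Complex.ofReal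
    rw [← Matrix.transpose_map, hLsym.eq]
  have hBsym : ((Complex.I * (τ : ℂ)) • lapC X)ᵀ = (Complex.I * (τ : ℂ)) • lapC X := by
    rw [Matrix.transpose_smul, hLcsym]
  have hUsymm : (transition X τ)ᵀ = transition X τ := by
    have h2 : (NormedSpace.exp ((Complex.I * (τ : ℂ)) • lapC X)).IsSymm :=
      Matrix.IsSymm.exp hBsym
    exact h2.eq
  have honesvec : (fun _ => (1 : ℂ)) ᵥ* transition X τ = fun _ => (1 : ℂ) := by
    rw [← hUsymm, Matrix.vecMul_transpose, hones]
  have hαβ : α + β = 1 := by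
    have e := congrArg (fun w => (fun _ => (1 : ℂ)) ⬝ᵥ w) hU
    simp only [Matrix.dotProduct_mulVec, honesvec] at e
    have e2 : (1 : ℂ) = α + β := by
      simpa [dotProduct_add, dotProduct_smul, dotProduct_single,
        smul_eq_mul] using e
    linear_combination -e2
  -- unitarity
  have hBH : ((Complex.I * (τ : ℂ)) • lapC X)ᴴ = -((Complex.I * (τ : ℂ)) • lapC X) := by
    rw [Matrix.conjTranspose_smul]
    have hLcH : (lapC X)ᴴ = lapC X := by
      show ((lapR X).map Complex.ofReal)ᴴ = (lapR X).map Complex.ofReal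
      ext i j
      simp only [Matrix.conjTranspose_apply, Matrix.map_apply, RCLike.star_def,
        Complex.conj_ofReal]
      have h3 := Matrix.ext_iff.mpr hLsym.eq i j
      rw [Matrix.transpose_apply] at h3
      rw [h3]
    have hstar : star (Complex.I * (τ : ℂ)) = -(Complex.I * (τ : ℂ)) := by
      simp [Complex.star_def, _root_.map_mul, Complex.conj_ofReal]
    rw [hLcH, hstar, neg_smul]
  have hUHU : (transition X τ)ᴴ * transition X τ = 1 := by
    have h1 : (transition X τ)ᴴ = NormedSpace.exp (-((Complex.I * (τ : ℂ)) • lapC X)) := by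
      show (NormedSpace.exp ((Complex.I * (τ : ℂ)) • lapC X))ᴴ = _
      rw [← Matrix.exp_conjTranspose, hBH]
    rw [h1]
    show _ * NormedSpace.exp ((Complex.I * (τ : ℂ)) • lapC X) = 1
    rw [← Matrix.exp_add_of_commute _ _ (Commute.neg_left (Commute.refl ((Complex.I * (τ : ℂ)) • lapC X))),
      neg_add_cancel]
    exact NormedSpace.exp_zero
  have hd : (starRingEnd ℂ) α * α + (starRingEnd ℂ) β * β = 1 := by
    have e : star (transition X τ *ᵥ (Pi.single a 1 : V → ℂ)) ⬝ᵥ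
        (transition X τ *ᵥ (Pi.single a 1 : V → ℂ)) = 1 := by
      rw [Matrix.star_mulVec, Matrix.dotProduct_mulVec, Matrix.vecMul_vecMul, hUHU,
        Matrix.vecMul_one, star_single, single_dotProduct, Pi.single_eq_same,
        one_mul]
    rw [hU] at e
    have hsaa : (Pi.single a 1 : V → ℂ) ⬝ᵥ Pi.single a 1 = 1 := by
      rw [single_dotProduct, Pi.single_eq_same, one_mul]
    have hsbb : (Pi.single b 1 : V → ℂ) ⬝ᵥ Pi.single b 1 = 1 := by
      rw [single_dotProduct, Pi.single_eq_same, one_mul]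
    have hsab : (Pi.single a 1 : V → ℂ) ⬝ᵥ Pi.single b 1 = 0 := by
      rw [single_dotProduct, Pi.single_eq_of_ne hab, mul_zero]
    have hsba : (Pi.single b 1 : V → ℂ) ⬝ᵥ Pi.single a 1 = 0 := by
      rw [single_dotProduct, Pi.single_eq_of_ne (Ne.symm hab), mul_zero]
    rw [star_add, star_smul, star_smul, star_single a, star_single b,
      add_dotProduct, smul_dotProduct, smul_dotProduct,
      dotProduct_add, dotProduct_add,
      dotProduct_smul, dotProduct_smul, dotProduct_smul,
      dotProduct_smul, hsaa, hsab, hsba, hsbb] at e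
    simp only [smul_eq_mul, mul_one, mul_zero, add_zero, zero_add] at e
    simpa only [starRingEnd_apply] using e
  by_cases hx0 : xc = 0
  · -- both projections vanish
    have hy0 : yc = 0 := by
      have h2 : β • yc = 0 := by
        have e := Eq1
        rw [hx0] at e
        simpa using e.symm
      rcases smul_eq_zero.mp h2 with h3 | h3
      · exact absurd h3 hβ
      · exact h3
    have hxr0 : xr = 0 := by
      funext i
      have h4 := congrFun (hxcast.symm.trans hx0) i
      simp only [Pi.zero_apply] at h4 ⊢
      exact_mod_cast h4
    have hyr0 : yr = 0 := by
      funext i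
      have h4 := congrFun (hycast.symm.trans hy0) i
      simp only [Pi.zero_apply] at h4 ⊢
      exact_mod_cast h4
    left
    rw [hxr0, hyr0]
  · obtain ⟨v, hv⟩ := Function.ne_iff.mp hx0
    have hv : xc v ≠ 0 := by simpa using hv
    set c : ℂ := (lam - α) / β with hcdef
    have hyx : yc = c • xc := by
      funext i
      have e := congrFun Eq1 i
      simp only [Pi.smul_apply, Pi.add_apply, smul_eq_mul] at e ⊢
      rw [hcdef]
      field_simp
      first
      | linear_combination e
      | linear_combination -e
      | linear_combination β * e
      | linear_combination -β * e
    have hlam2 : lam = α + β * c := by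
      rw [hcdef]; field_simp; ring
    have hyv : yc v = c * xc v := by
      simpa [smul_eq_mul] using congrFun hyx v
    have hconj : (starRingEnd ℂ) lam = (starRingEnd ℂ) α + (starRingEnd ℂ) β * c := by
      have e2 := congrFun Eq2 v
      simp only [Pi.smul_apply, Pi.add_apply, smul_eq_mul] at e2
      rw [hyv] at e2
      apply mul_right_cancel₀ hv
      first
      | linear_combination e2
      | linear_combination -e2
    have hll : lam * (starRingEnd ℂ) lam = 1 := by
      rw [hlamdef, ← Complex.exp_conj]
      have h2 : (starRingEnd ℂ) (Complex.I * τ * μ) = -(Complex.I * τ * μ) := by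
        simp [_root_.map_mul, Complex.conj_ofReal]
      rw [h2, ← Complex.exp_add]
      simp
    have hαβ' : (starRingEnd ℂ) α + (starRingEnd ℂ) β = 1 := by
      have h2 := congrArg (starRingEnd ℂ) hαβ
      simpa using h2
    have hβ' : (starRingEnd ℂ) β ≠ 0 := by
      simpa using hβ
    have hA : α = 1 - β := by linear_combination hαβ
    have hA' : (starRingEnd ℂ) α = 1 - (starRingEnd ℂ) β := by linear_combination hαβ'
    rw [hconj, hlam2, hA', hA] at hll
    have h6 : β + (starRingEnd ℂ) β = 2 * (β * (starRingEnd ℂ) β) := by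
      have hn := hd
      rw [hA', hA] at hn
      linear_combination -hn
    have h7 : (β * (starRingEnd ℂ) β) * (c ^ 2 - 1) = 0 := by
      linear_combination hll + (1 - c) * h6
    have hc2 : c ^ 2 = 1 := by
      have hne : β * (starRingEnd ℂ) β ≠ 0 := mul_ne_zero hβ hβ'
      have h8 := (mul_eq_zero.mp h7).resolve_left hne
      linear_combination h8
    have hcpm : c = 1 ∨ c = -1 := by
      have h9 : (c - 1) * (c + 1) = 0 := by linear_combination hc2
      rcases mul_eq_zero.mp h9 with h10 | h10
      · left; linear_combination h10
      · right; linear_combination h10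
    rcases hcpm with hc1 | hcm1
    · left
      rw [hc1, one_smul] at hyx
      funext i
      have h11 := congrFun (hycast.symm.trans (hyx.trans hxcast)) i
      exact_mod_cast h11.symm
    · right
      rw [hcm1, neg_one_smul] at hyx
      funext i
      have h11 := congrFun (hycast.symm.trans hyx) i
      have h12 := congrFun hxcast i
      rw [Pi.neg_apply, h12] at h11
      have h13 : (yr i : ℂ) = ((-(xr i) : ℝ) : ℂ) := by
        rw [h11]; push_cast; ring
      have h14 : yr i = -(xr i) := by exact_mod_cast h13
      simp [Pi.neg_apply, h14]
end

section
/- Let X be a connected finite simple graph and let a be a vertex with eigenvalue support Φ_a with respect to the Laplacian matrix. Then |Φ_a| ≥ ecc(a) + 1, where ecc(a) is the eccentricity of a, i.e., the maximum graph distance from a to any other vertex. -/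
open Matrix

section Aux

variable {V : Type*} [Fintype V] [DecidableEq V] {X : SimpleGraph V}

lemma lapR_eq (X : SimpleGraph V) [inst : DecidableRel X.Adj] :
    lapR X = X.lapMatrix ℝ :=
  congrArg (fun d => @SimpleGraph.lapMatrix V ℝ _ X d _ _) (Subsingleton.elim _ _)

lemma lapR_apply_adj {w u : V} (h : X.Adj w u) : lapR X w u = -1 := by
  classical
  rw [lapR_eq]
  simp [SimpleGraph.lapMatrix, SimpleGraph.degMatrix, Matrix.sub_apply,
    Matrix.diagonal_apply_ne _ h.ne, h]

lemma lapR_apply_of_not_adj {w u : V} (hne : w ≠ u) (h : ¬ X.Adj w u) :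
    lapR X w u = 0 := by
  classical
  rw [lapR_eq]
  simp [SimpleGraph.lapMatrix, SimpleGraph.degMatrix, Matrix.sub_apply,
    Matrix.diagonal_apply_ne _ hne, h]

lemma dist_adj_pred (hconn : X.Connected) {a u : V} {k : ℕ}
    (h : X.dist a u = k + 1) : ∃ w, X.Adj w u ∧ X.dist a w = k := by
  obtain ⟨p, hp⟩ := SimpleGraph.Connected.exists_walk_length_eq_dist hconn a u
  have hne : u ≠ a := by
    rintro rfl
    rw [SimpleGraph.dist_self] at h
    omega
  obtain ⟨w, hadj, q', hq'⟩ := (p.reverse).exists_eq_cons_of_ne hne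
  have hlen : q'.length = k := by
    have := congrArg SimpleGraph.Walk.length hq'
    rw [SimpleGraph.Walk.length_reverse, hp, h, SimpleGraph.Walk.length_cons] at this
    omega
  refine ⟨w, hadj.symm, ?_⟩
  have h1 : X.dist a w ≤ k := by
    have := SimpleGraph.dist_le q'.reverse
    rwa [SimpleGraph.Walk.length_reverse, hlen] at this
  have h2 : X.dist a u ≤ X.dist a w + X.dist w u :=
    hconn.dist_triangle
  have h3 : X.dist w u ≤ 1 := by
    have := SimpleGraph.dist_le (SimpleGraph.Walk.cons hadj.symm SimpleGraph.Walk.nil)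
    simpa using this
  omega

lemma exists_vertex_dist_eq (hconn : X.Connected) (a : V) :
    ∀ (k : ℕ), (∃ u, X.dist a u = k) → ∀ j ≤ k, ∃ w, X.dist a w = j := by
  intro k
  induction k with
  | zero =>
    intro _ j hj
    exact ⟨a, by simpa [Nat.le_zero.mp hj] using SimpleGraph.dist_self X⟩
  | succ k ih =>
    rintro ⟨u, hu⟩ j hj
    rcases Nat.lt_or_ge j (k + 1) with hlt | hge
    · obtain ⟨w, -, hw⟩ := dist_adj_pred hconn hu
      exact ih ⟨w, hw⟩ j (by omega)
    · exact ⟨u, by omega⟩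

lemma lapR_pow_zero (hconn : X.Connected) (a : V) :
    ∀ (k : ℕ) (u : V), k < X.dist a u → (lapR X ^ k) a u = 0 := by
  intro k
  induction k with
  | zero =>
    intro u h
    rw [pow_zero]
    exact Matrix.one_apply_ne (by rintro rfl; simp [SimpleGraph.dist_self] at h)
  | succ k ih =>
    intro u h
    rw [pow_succ, Matrix.mul_apply]
    refine Finset.sum_eq_zero fun w _ => ?_
    by_cases hwu : w = u
    · subst hwu
      rw [ih w (by omega), zero_mul]
    by_cases hadj : X.Adj w u
    · have h3 : X.dist w u ≤ 1 := by
        have := SimpleGraph.dist_le (SimpleGraph.Walk.cons hadj SimpleGraph.Walk.nil)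
        simpa using this
      have h2 : X.dist a u ≤ X.dist a w + X.dist w u := hconn.dist_triangle
      rw [ih w (by omega), zero_mul]
    · rw [lapR_apply_of_not_adj hwu hadj, mul_zero]

lemma lapR_pow_pos (hconn : X.Connected) (a : V) :
    ∀ (k : ℕ) (u : V), X.dist a u = k → 0 < (-1 : ℝ) ^ k * (lapR X ^ k) a u := by
  intro k
  induction k with
  | zero =>
    intro u h
    have : a = u := (hconn.dist_eq_zero_iff).mp h
    subst this
    simp
  | succ k ih =>
    intro u h
    obtain ⟨w0, hadj0, hw0⟩ := dist_adj_pred hconn h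
    have hmul : (lapR X ^ (k + 1)) a u = ∑ w, (lapR X ^ k) a w * lapR X w u := by
      rw [pow_succ, Matrix.mul_apply]
    rw [hmul, Finset.mul_sum]
    refine Finset.sum_pos' (fun w _ => ?_) ⟨w0, Finset.mem_univ _, ?_⟩
    · by_cases hwu : w = u
      · have hk : k < X.dist a w := by rw [hwu]; omega
        rw [lapR_pow_zero hconn a k w hk]
        simp
      by_cases hadj : X.Adj w u
      · rw [lapR_apply_adj hadj]
        have hge : k ≤ X.dist a w := by
          have h2 : X.dist a u ≤ X.dist a w + X.dist w u := hconn.dist_triangle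
          have h3 : X.dist w u ≤ 1 := by
            have := SimpleGraph.dist_le (SimpleGraph.Walk.cons hadj SimpleGraph.Walk.nil)
            simpa using this
          omega
        rcases eq_or_lt_of_le hge with heq | hlt
        · have := ih w heq.symm
          have hrw : (-1 : ℝ) ^ (k + 1) * ((lapR X ^ k) a w * -1)
              = (-1 : ℝ) ^ k * (lapR X ^ k) a w := by
            rw [pow_succ]; ring
          rw [hrw]
          exact le_of_lt this
        · rw [lapR_pow_zero hconn a k w hlt]
          simp
      · rw [lapR_apply_of_not_adj hwu hadj]
        simp
    · rw [lapR_apply_adj hadj0]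
      have := ih w0 hw0
      have hrw : (-1 : ℝ) ^ (k + 1) * ((lapR X ^ k) a w0 * -1)
          = (-1 : ℝ) ^ k * (lapR X ^ k) a w0 := by
        rw [pow_succ]; ring
      rw [hrw]
      exact this

end Aux

/-- The size of the eigenvalue support of a vertex is at
least its eccentricity plus one. -/
theorem eigSupport_ge_eccentricity {V : Type*} [Fintype V] [DecidableEq V]
    (X : SimpleGraph V) (hconn : X.Connected) (a : V) :
    Finset.univ.sup (fun u => X.dist a u) + 1 ≤ (eigSupport X a).ncard := by
  classical
  have hV : Nonempty V := hconn.nonempty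
  set m := Finset.univ.sup (fun u => X.dist a u) with hm
  set L := lapR X with hLdef
  -- vertices at every distance up to m
  obtain ⟨u0, -, hu0⟩ :=
    Finset.exists_mem_eq_sup Finset.univ Finset.univ_nonempty (fun u => X.dist a u)
  have hvert : ∀ j : Fin (m + 1), ∃ w, X.dist a w = (j : ℕ) :=
    fun j => exists_vertex_dist_eq hconn a m ⟨u0, hu0.symm⟩ j (Nat.lt_succ_iff.mp j.isLt)
  choose u hu using hvert
  -- symmetry of powers of the Laplacian
  have hLsymm : Lᵀ = L := by
    rw [hLdef, lapR_eq]
    exact X.isSymm_lapMatrix (R := ℝ)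
  have hpowsymm : ∀ k : ℕ, ∀ i j : V, (L ^ k) i j = (L ^ k) j i := by
    intro k i j
    conv_lhs => rw [← hLsymm, ← Matrix.transpose_pow, Matrix.transpose_apply]
  -- the triangular matrix of evaluations
  set N : Matrix (Fin (m + 1)) (Fin (m + 1)) ℝ :=
    Matrix.of (fun k j => (L ^ (k : ℕ)) a (u j)) with hN
  have htri : N.BlockTriangular OrderDual.toDual := by
    intro i j hij
    have hij' : (i : ℕ) < (j : ℕ) := hij
    exact lapR_pow_zero hconn a i (u j) (by rw [hu j]; exact hij')
  have hdiag : ∀ k, N k k ≠ 0 := by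
    intro k h0
    have := lapR_pow_pos hconn a k (u k) (hu k)
    rw [show (lapR X ^ (k : ℕ)) a (u k) = N k k from rfl, h0, mul_zero] at this
    exact lt_irrefl 0 this
  have hdet : N.det ≠ 0 := by
    rw [Matrix.det_of_lowerTriangular N htri]
    exact Finset.prod_ne_zero_iff.mpr fun k _ => hdiag k
  have hNrows : LinearIndependent ℝ (fun k => N k) :=
    Matrix.linearIndependent_rows_iff_isUnit.mpr
      ((Matrix.isUnit_iff_isUnit_det N).mpr (isUnit_iff_ne_zero.mpr hdet))
  -- spectral decomposition
  set T := Matrix.toEuclideanLin (lapR X) with hT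
  have hherm : (lapR X).IsHermitian := by
    rw [lapR_eq]
    exact (SimpleGraph.posSemidef_lapMatrix ℝ X).1
  have hsym : T.IsSymmetric := Matrix.isHermitian_iff_isSymmetric.mp hherm
  have htop : (⨆ μ : ℝ, Module.End.eigenspace T μ) = ⊤ :=
    Submodule.orthogonal_eq_bot_iff.mp hsym.orthogonalComplement_iSup_eigenspaces_eq_bot
  set ea : EuclideanSpace ℝ V := (WithLp.equiv 2 (V → ℝ)).symm (Pi.single a 1) with hea
  have hmem : ea ∈ ⨆ μ : ℝ, Module.End.eigenspace T μ := by
    rw [htop]; exact Submodule.mem_top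
  obtain ⟨f, hf, hsum⟩ := (Submodule.mem_iSup_iff_exists_finsupp _ ea).mp hmem
  rw [Finsupp.sum] at hsum
  -- every eigenprojection of ea is the corresponding component of f
  have hproj : ∀ μ : ℝ,
      ((Submodule.orthogonalProjectionOnto (Module.End.eigenspace T μ) ea : EuclideanSpace ℝ V)) = f μ := by
    intro μ
    rw [← hsum, map_sum, Submodule.coe_sum]
    rw [Finset.sum_eq_single μ]
    · exact congrArg Subtype.val (Submodule.orthogonalProjectionOnto_mem_subspace_eq_self (K := Module.End.eigenspace T μ) ⟨f μ, hf μ⟩)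
    · intro ν _ hνμ
      have hz : f ν ∈ (Module.End.eigenspace T μ)ᗮ := by
        rw [Submodule.mem_orthogonal]
        intro x hx
        exact hsym.orthogonalFamily_eigenspaces hνμ.symm ⟨x, hx⟩ ⟨f ν, hf ν⟩
      rw [Submodule.orthogonalProjectionOnto_apply_of_mem_orthogonal hz]
      rfl
    · intro hμ
      rw [Finsupp.notMem_support_iff.mp hμ]
      simp
  -- bridge between eigProj mulVec and orthogonal projection
  have hbridge : ∀ (μ : ℝ),
      eigProj X μ *ᵥ Pi.single a 1 =
        WithLp.equiv 2 (V → ℝ)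
          ((Submodule.orthogonalProjectionOnto (Module.End.eigenspace T μ) ea : EuclideanSpace ℝ V)) := by
    intro μ
    have h1 : Matrix.toEuclideanLin (eigProj X μ) =
        (Module.End.eigenspace T μ).subtype ∘ₗ
          (Submodule.orthogonalProjectionOnto (Module.End.eigenspace T μ) :
            EuclideanSpace ℝ V →L[ℝ] _).toLinearMap :=
      LinearEquiv.apply_symm_apply _ _
    have h2 : WithLp.equiv 2 (V → ℝ) (Matrix.toEuclideanLin (eigProj X μ)
        ((WithLp.equiv 2 (V → ℝ)).symm (Pi.single a 1))) = eigProj X μ *ᵥ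
        (WithLp.equiv 2 (V → ℝ)) ((WithLp.equiv 2 (V → ℝ)).symm (Pi.single a 1)) := rfl
    rw [Equiv.apply_symm_apply] at h2
    rw [← h2, h1]
    rfl
  -- identification of the eigenvalue support with the support of f
  have hEsupp : eigSupport X a = (↑f.support : Set ℝ) := by
    ext μ
    simp only [eigSupport, Set.mem_setOf_eq, Finset.coe_sort_coe, Finset.mem_coe,
      Finsupp.mem_support_iff]
    rw [hbridge μ, hproj μ]
    constructor
    · intro h h0; exact h (by rw [h0]; rfl)
    · intro h h0
      apply h
      have := congrArg (WithLp.equiv 2 (V → ℝ)).symm h0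
      rwa [Equiv.symm_apply_apply] at this
  -- the span of the nonzero eigenprojections
  set W : Submodule ℝ (EuclideanSpace ℝ V) :=
    Submodule.span ℝ (↑(f.support.image f) : Set (EuclideanSpace ℝ V)) with hW
  have hgen : ∀ μ ∈ f.support, f μ ∈ W :=
    fun μ h => Submodule.subset_span (Finset.mem_coe.mpr (Finset.mem_image_of_mem f h))
  have hWrank : Module.finrank ℝ W ≤ f.support.card :=
    le_trans (finrank_span_finset_le_card _) Finset.card_image_le
  have heaW : ea ∈ W := by
    rw [← hsum]
    exact Submodule.sum_mem _ hgen
  have hWinv : ∀ x ∈ W, T x ∈ W := by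
    intro x hx
    refine Submodule.span_induction ?_ ?_ ?_ ?_ hx
    · intro y hy
      obtain ⟨μ, hμ, rfl⟩ := Finset.mem_image.mp hy
      rw [Module.End.mem_eigenspace_iff.mp (hf μ)]
      exact Submodule.smul_mem _ _ (hgen μ hμ)
    · simp
    · intro y z _ _ hy hz
      rw [map_add]; exact Submodule.add_mem _ hy hz
    · intro c y _ hy
      rw [LinearMap.map_smul]; exact Submodule.smul_mem _ _ hy
  have hpowW : ∀ k : ℕ, (T ^ k) ea ∈ W := by
    intro k
    induction k with
    | zero => simpa using heaW
    | succ k ih =>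
      rw [pow_succ', Module.End.mul_apply]
      exact hWinv _ ih
  -- identify (T ^ k) ea
  have hval : ∀ (k : ℕ) (x : V → ℝ),
      (T ^ k) ((WithLp.equiv 2 (V → ℝ)).symm x) =
        (WithLp.equiv 2 (V → ℝ)).symm ((L ^ k) *ᵥ x) := by
    intro k
    induction k with
    | zero => intro x; simp
    | succ k ih =>
      intro x
      rw [pow_succ', Module.End.mul_apply, ih x, hT, pow_succ', ← Matrix.mulVec_mulVec]
      rfl
  set v : Fin (m + 1) → EuclideanSpace ℝ V := fun k => (T ^ (k : ℕ)) ea with hv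
  set φ : EuclideanSpace ℝ V →ₗ[ℝ] (Fin (m + 1) → ℝ) :=
    LinearMap.pi (fun j => (LinearMap.proj (u j)).comp
      (WithLp.linearEquiv 2 ℝ (V → ℝ)).toLinearMap) with hφ
  have hφv : (φ ∘ v) = fun k => N k := by
    funext k
    ext j
    have : v k = (WithLp.equiv 2 (V → ℝ)).symm ((L ^ (k : ℕ)) *ᵥ Pi.single a 1) := hval k _
    simp only [hφ, Function.comp_apply, LinearMap.pi_apply, LinearMap.comp_apply,
      LinearMap.proj_apply, this]
    have heq : (WithLp.linearEquiv 2 ℝ (V → ℝ)).toLinearMap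
        ((WithLp.equiv 2 (V → ℝ)).symm ((L ^ (k : ℕ)) *ᵥ Pi.single a 1))
        = (L ^ (k : ℕ)) *ᵥ Pi.single a 1 := rfl
    rw [heq, Matrix.mulVec_single]
    simp only [MulOpposite.op_one, one_smul, Matrix.col_apply]
    rw [hpowsymm]
    rfl
  have hvind : LinearIndependent ℝ v := by
    apply LinearIndependent.of_comp φ
    rw [hφv]
    exact hNrows
  have h1 : Submodule.span ℝ (Set.range v) ≤ W := by
    rw [Submodule.span_le]
    rintro y ⟨k, rfl⟩
    exact hpowW k
  have h2 : Module.finrank ℝ (Submodule.span ℝ (Set.range v)) = m + 1 := by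
    rw [finrank_span_eq_card hvind, Fintype.card_fin]
  calc m + 1 = Module.finrank ℝ (Submodule.span ℝ (Set.range v)) := h2.symm
    _ ≤ Module.finrank ℝ W := Submodule.finrank_mono h1
    _ ≤ f.support.card := hWrank
    _ = (eigSupport X a).ncard := by rw [hEsupp, Set.ncard_coe_finset]
end
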